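/- Let X be a pre-Riesz space with dim X = n < ∞. If there exist n pairwise distinct band projections of rank 1 on X, then X is linearly order isomorphic to ℝⁿ equipped with the standard (componentwise) order; that is, there is a linear bijection J : X → ℝⁿ such that x ≤ y in X if and only if J x ≤ J y componentwise. -/

import Mathlib

open Pointwise

variable {X : Type*} [AddCommGroup X] [PartialOrder X] [IsOrderedAddMonoid X] [Module ℝ X] [PosSMulStrictMono ℝ X]

/-- Two elements of an ordered vector space are disjoint if the sets `{x+y, -x-y}` and
`{x-y, y-x}` have the same set of upper bounds. -/
def UDisjoint (x y : X) : Prop :=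
  upperBounds ({x + y, -x - y} : Set X) = upperBounds ({x - y, y - x} : Set X)

/-- The disjoint complement `S^⊥` of a set `S`. -/
def dComp (S : Set X) : Set X := {x : X | ∀ s ∈ S, UDisjoint x s}

/-- A band: a set equal to its double disjoint complement. -/
def IsBand (B : Set X) : Prop := B = dComp (dComp B)

/-- A projection band: a band `B` with `B ∩ B^⊥ = {0}` and `B + B^⊥ = X`. -/
def IsProjBand (B : Set X) : Prop :=
  IsBand B ∧ B ∩ dComp B = {0} ∧ ∀ x : X, ∃ b ∈ B, ∃ c ∈ dComp B, x = b + c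

/-- A positive linear operator. -/
def IsPosMap (T : X →ₗ[ℝ] X) : Prop := ∀ x : X, 0 ≤ x → 0 ≤ T x

/-- A band projection: a linear projection whose range is a projection band and whose
kernel is the disjoint complement of the range. -/
def IsBandProj (P : X →ₗ[ℝ] X) : Prop :=
  P ∘ₗ P = P ∧ IsProjBand (Set.range ⇑P) ∧ (LinearMap.ker P : Set X) = dComp (Set.range ⇑P)

/-- A pre-Riesz space: for every nonempty finite `A ⊆ X` and every `x`, if the upper bounds
of `x + A` are contained in the upper bounds of `A`, then `x ≥ 0`. -/
def IsPreRiesz (X : Type*) [AddCommGroup X] [PartialOrder X] [IsOrderedAddMonoid X] [Module ℝ X] [PosSMulStrictMono ℝ X] : Prop :=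
  ∀ (A : Set X) (x : X), A.Finite → A.Nonempty →
    upperBounds ((x + ·) '' A) ⊆ upperBounds A → 0 ≤ x

lemma uDisjoint_symm {x y : X} (h : UDisjoint x y) : UDisjoint y x := by
  unfold UDisjoint at *
  have h1 : ({y + x, -y - x} : Set X) = {x + y, -x - y} := by
    rw [Set.pair_eq_pair_iff]; left; constructor <;> abel_nf
  have h2 : ({y - x, x - y} : Set X) = {x - y, y - x} := Set.pair_comm _ _
  rw [h1, h2, h]

/-- In a pre-Riesz space, if `b ⊥ c` and `0 ≤ b + c` then `0 ≤ b`. -/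
lemma nonneg_left_of_uDisjoint (hX : IsPreRiesz X) {b c : X}
    (h : UDisjoint b c) (hbc : 0 ≤ b + c) : 0 ≤ b := by
  have key : 0 ≤ b + b := by
    apply hX ({b - c, c - b} : Set X) (b + b) (Set.toFinite _) ⟨b - c, by simp⟩
    intro u hu
    have h1 : b + b + (c - b) ≤ u := hu ⟨c - b, by simp, rfl⟩
    have hbc' : b + c ≤ u := by
      calc b + c = b + b + (c - b) := by abel
      _ ≤ u := h1
    have hu' : u ∈ upperBounds ({b + c, -b - c} : Set X) := by
      intro z hz
      rcases hz with rfl | hz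
      · exact hbc'
      · simp only [Set.mem_singleton_iff] at hz
        subst hz
        calc -b - c = -(b + c) := by abel
        _ ≤ 0 := neg_nonpos_of_nonneg hbc
        _ ≤ b + c := hbc
        _ ≤ u := hbc'
    rw [h] at hu'
    exact hu'
  have h2 : (0:ℝ) ≤ (2:ℝ)⁻¹ := by norm_num
  have := smul_nonneg h2 key
  rwa [show ((2:ℝ)⁻¹ • (b + b) : X) = b by
    rw [← two_smul ℝ b, smul_smul]; norm_num] at this

lemma nonneg_of_uDisjoint (hX : IsPreRiesz X) {b c : X}
    (h : UDisjoint b c) (hbc : 0 ≤ b + c) : 0 ≤ b ∧ 0 ≤ c :=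
  ⟨nonneg_left_of_uDisjoint hX h hbc,
   nonneg_left_of_uDisjoint hX (uDisjoint_symm h) (by rwa [add_comm])⟩

/-- Pre-Riesz spaces are directed upwards. -/
lemma preRiesz_directed (hX : IsPreRiesz X) (a : X) : ∃ u : X, 0 ≤ u ∧ a ≤ u := by
  by_cases h : (upperBounds ({0, a} : Set X)).Nonempty
  · obtain ⟨u, hu⟩ := h
    exact ⟨u, hu (by simp), hu (by simp)⟩
  · refine ⟨0, le_rfl, ?_⟩
    have hall : ∀ y : X, 0 ≤ y := by
      intro y
      refine hX ({0, a} : Set X) y (Set.toFinite _) ⟨0, by simp⟩ ?_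
      intro u hu
      exfalso
      apply h
      refine ⟨u - y, ?_⟩
      intro z hz
      have h0 : y + (0:X) ≤ u := hu (Set.mem_image_of_mem _ (by simp))
      have ha : y + a ≤ u := hu (Set.mem_image_of_mem _ (by simp))
      rcases hz with rfl | hz
      · rw [le_sub_iff_add_le, zero_add]
        simpa using h0
      · simp only [Set.mem_singleton_iff] at hz; subst hz
        rw [le_sub_iff_add_le, add_comm]
        exact ha
    have := hall (-a)
    simpa using neg_nonneg.mp this

/-- Band projections are positive, as is their complement. -/
lemma bandProj_pos (hX : IsPreRiesz X) {P : X →ₗ[ℝ] X} (hP : IsBandProj P)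
    {x : X} (hx : 0 ≤ x) : 0 ≤ P x ∧ 0 ≤ x - P x := by
  obtain ⟨hidem, ⟨_, _, hdecomp⟩, hker⟩ := hP
  obtain ⟨b, hb, c, hc, hxbc⟩ := hdecomp x
  have hPb : P b = b := by
    obtain ⟨v, rfl⟩ := hb
    have := LinearMap.ext_iff.mp hidem v
    simpa using this
  have hPc : P c = 0 := by
    have : c ∈ (LinearMap.ker P : Set X) := by rw [hker]; exact hc
    simpa using this
  have hPx : P x = b := by rw [hxbc, map_add, hPb, hPc, add_zero]
  have hdisj : UDisjoint b c := uDisjoint_symm (hc b hb)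
  have hpos := nonneg_of_uDisjoint hX hdisj (hxbc ▸ hx)
  refine ⟨hPx ▸ hpos.1, ?_⟩
  rw [hPx, hxbc]
  simpa using hpos.2

/-- A nonnegative coefficient criterion. -/
lemma coeff_nonneg {c : ℝ} {e : X} (h : 0 ≤ c • e) (he : 0 ≤ e) (hne : e ≠ 0) : 0 ≤ c := by
  by_contra hc
  push_neg at hc
  have h1 : (0:ℝ) ≤ -c⁻¹ := neg_nonneg.mpr (inv_nonpos.mpr hc.le)
  have h2 : 0 ≤ (-c⁻¹) • (c • e) := smul_nonneg h1 h
  rw [smul_smul] at h2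
  have hc0 : c ≠ 0 := ne_of_lt hc
  have : (-c⁻¹ * c) = -1 := by field_simp
  rw [this] at h2
  have : e ≤ 0 := by simpa using neg_nonneg.mp (by simpa using h2)
  exact hne (le_antisymm this he)

/-- A band projection fixes its range. -/
lemma bandProj_fix {P : X →ₗ[ℝ] X} (hP : IsBandProj P) {v : X}
    (hv : v ∈ Set.range ⇑P) : P v = v := by
  obtain ⟨w, rfl⟩ := hv
  have := LinearMap.ext_iff.mp hP.1 w
  simpa using this

/-- Two band projections with the same range coincide. -/
lemma bandProj_ext {P Q : X →ₗ[ℝ] X} (hPb : IsBandProj P) (hQb : IsBandProj Q)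
    (hrg : Set.range ⇑P = Set.range ⇑Q) : P = Q := by
  ext x
  have hker : (LinearMap.ker P : Set X) = (LinearMap.ker Q : Set X) := by
    rw [hPb.2.2, hQb.2.2, hrg]
  have h1 : x - P x ∈ LinearMap.ker P := by
    rw [LinearMap.mem_ker, map_sub, bandProj_fix hPb ⟨x, rfl⟩, sub_self]
  have h2 : x - P x ∈ LinearMap.ker Q := by
    have : x - P x ∈ (LinearMap.ker P : Set X) := h1
    rw [hker] at this
    exact this
  have h3 : Q (x - P x) = 0 := h2
  have h4 : Q (P x) = P x := bandProj_fix hQb (hrg ▸ ⟨x, rfl⟩)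
  have := map_sub Q x (P x)
  rw [h3, h4] at this
  have : Q x = P x := by linear_combination (norm := abel) -this
  simp [this]

/-- If an `n`-dimensional pre-Riesz space admits `n` distinct rank-one band projections,
then it is linearly order isomorphic to `ℝⁿ` with the standard (componentwise) order. -/
theorem stmt_16 (hX : IsPreRiesz X) [FiniteDimensional ℝ X]
    (P : Fin (Module.finrank ℝ X) → (X →ₗ[ℝ] X)) (hinj : Function.Injective P)
    (hP : ∀ i, IsBandProj (P i))
    (hrank : ∀ i, Module.finrank ℝ (LinearMap.range (P i)) = 1) :
    ∃ J : X ≃ₗ[ℝ] (Fin (Module.finrank ℝ X) → ℝ), ∀ x y : X, x ≤ y ↔ J x ≤ J y := by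
  rcases Nat.eq_zero_or_pos (Module.finrank ℝ X) with hn | hn
  · haveI : Subsingleton X := by
      rw [← Module.finrank_zero_iff (R := ℝ) (M := X)]
      exact hn
    refine ⟨LinearEquiv.ofFinrankEq _ _ (by simp [hn]), fun x y => ?_⟩
    rw [Subsingleton.elim x y]
    simp
  haveI : Nonempty (Fin (Module.finrank ℝ X)) := ⟨⟨0, hn⟩⟩
  have hpos : ∀ i, ∀ x : X, 0 ≤ x → 0 ≤ P i x := fun i x hx => (bandProj_pos hX (hP i) hx).1
  have hcpos : ∀ i, ∀ x : X, 0 ≤ x → 0 ≤ x - P i x := fun i x hx => (bandProj_pos hX (hP i) hx).2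
  -- positive generators of the ranges
  have he : ∀ i, ∃ e : X, 0 ≤ e ∧ e ≠ 0 ∧ LinearMap.range (P i) = Submodule.span ℝ {e} := by
    intro i
    have hbot : LinearMap.range (P i) ≠ ⊥ := by
      intro hbot
      have := hrank i
      rw [hbot] at this
      simp at this
    obtain ⟨v, hv, hv0⟩ := Submodule.exists_mem_ne_zero_of_ne_bot hbot
    obtain ⟨u, hu0, huv⟩ := preRiesz_directed hX v
    have hPv : P i v = v := bandProj_fix (hP i) (LinearMap.mem_range.mp hv)
    have hb1 : 0 ≤ P i u := hpos i u hu0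
    have hb2 : 0 ≤ P i (u - v) := hpos i (u - v) (sub_nonneg.mpr huv)
    have hdiff : P i u - P i (u - v) = v := by rw [← map_sub, sub_sub_cancel, hPv]
    have hkey : ∃ e : X, 0 ≤ e ∧ e ≠ 0 ∧ e ∈ LinearMap.range (P i) := by
      by_cases h1 : P i u = 0
      · refine ⟨P i (u - v), hb2, ?_, ⟨u - v, rfl⟩⟩
        intro h2
        rw [h1, h2, sub_zero] at hdiff
        exact hv0 hdiff.symm
      · exact ⟨P i u, hb1, h1, ⟨u, rfl⟩⟩
    obtain ⟨e, he0, hene, hemem⟩ := hkey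
    refine ⟨e, he0, hene, ?_⟩
    refine (Submodule.eq_of_le_of_finrank_le ?_ ?_).symm
    · rw [Submodule.span_le, Set.singleton_subset_iff]
      exact hemem
    · rw [hrank i, finrank_span_singleton hene]
  choose e he0 hene hespan using he
  have hfix : ∀ i, P i (e i) = e i := by
    intro i
    refine bandProj_fix (hP i) ?_
    have : e i ∈ LinearMap.range (P i) := by
      rw [hespan i]
      exact Submodule.mem_span_singleton_self _
    exact LinearMap.mem_range.mp this
  -- coefficients
  have hc : ∀ i j, ∃ a : ℝ, 0 ≤ a ∧ P i (e j) = a • e i := by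
    intro i j
    have hmem : P i (e j) ∈ Submodule.span ℝ {e i} := by
      rw [← hespan i]; exact ⟨e j, rfl⟩
    obtain ⟨a, ha⟩ := Submodule.mem_span_singleton.mp hmem
    refine ⟨a, ?_, ha.symm⟩
    exact coeff_nonneg (ha ▸ hpos i (e j) (he0 j)) (he0 i) (hene i)
  choose a ha0 hae using hc
  -- off-diagonal coefficients vanish
  have hzero : ∀ i j, i ≠ j → a i j = 0 := by
    intro i j hij
    by_contra hne'
    have hapos : 0 < a i j := lt_of_le_of_ne (ha0 i j) (Ne.symm hne')
    have hu : 0 ≤ e j - a i j • e i := by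
      have := hcpos i (e j) (he0 j)
      rwa [hae i j] at this
    have h1 : 0 ≤ (e j - a i j • e i) - P j (e j - a i j • e i) :=
      hcpos j _ hu
    have hPj : P j (e j - a i j • e i) = e j - (a i j * a j i) • e j := by
      rw [map_sub, map_smul, hfix j, hae j i, smul_smul, mul_smul, smul_smul]
    rw [hPj] at h1
    have h1' : 0 ≤ a i j • (a j i • e j - e i) := by
      have heq : (e j - a i j • e i) - (e j - (a i j * a j i) • e j)
          = a i j • (a j i • e j - e i) := by
        rw [smul_sub, smul_smul]
        abel
      rwa [heq] at h1
    have h2 : 0 ≤ a j i • e j - e i := by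
      have := smul_nonneg (inv_nonneg.mpr hapos.le) h1'
      rwa [smul_smul, inv_mul_cancel₀ (ne_of_gt hapos), one_smul] at this
    have h3 : 0 ≤ e i - a j i • e j := by
      have := hcpos j (e i) (he0 i)
      rwa [hae j i] at this
    have heq : e i = a j i • e j :=
      le_antisymm (by simpa [sub_nonneg] using h2) (by simpa [sub_nonneg] using h3)
    have haji : a j i ≠ 0 := by
      intro h0
      rw [h0, zero_smul] at heq
      exact hene i heq
    have hspan : Submodule.span ℝ {e i} = Submodule.span ℝ ({e j} : Set X) := by
      rw [heq]
      exact Submodule.span_singleton_smul_eq (isUnit_iff_ne_zero.mpr haji) _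
    have hrg : LinearMap.range (P i) = LinearMap.range (P j) := by
      rw [hespan i, hespan j, hspan]
    have hrg' : Set.range ⇑(P i) = Set.range ⇑(P j) := by
      rw [← LinearMap.coe_range, ← LinearMap.coe_range, hrg]
    exact hij (hinj (bandProj_ext (hP i) (hP j) hrg'))
  -- the generators form a basis
  have hli : LinearIndependent ℝ e := by
    rw [Fintype.linearIndependent_iff]
    intro g hg i
    have := congrArg (P i) hg
    rw [map_sum, map_zero] at this
    have hsum : ∑ j, P i (g j • e j) = g i • e i := by
      rw [Finset.sum_eq_single i]
      · rw [map_smul, hfix i]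
      · intro j _ hji
        rw [map_smul, hae i j, hzero i j (Ne.symm hji), zero_smul, smul_zero]
      · intro h; exact absurd (Finset.mem_univ i) h
    rw [hsum] at this
    rcases smul_eq_zero.mp this with h | h
    · exact h
    · exact absurd h (hene i)
  have hcard : Fintype.card (Fin (Module.finrank ℝ X)) = Module.finrank ℝ X := by simp
  let b : Module.Basis (Fin (Module.finrank ℝ X)) ℝ X :=
    basisOfLinearIndependentOfCardEqFinrank hli hcard
  have hb : ⇑b = e := coe_basisOfLinearIndependentOfCardEqFinrank hli hcard
  refine ⟨b.equivFun, ?_⟩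
  have hrepr : ∀ z : X, ∑ j, b.equivFun z j • e j = z := by
    intro z
    have := b.sum_equivFun z
    rwa [hb] at this
  have key : ∀ z : X, 0 ≤ z ↔ ∀ i, 0 ≤ b.equivFun z i := by
    intro z
    constructor
    · intro hz i
      have hPz : P i z = b.equivFun z i • e i := by
        rw [← hrepr z, map_sum, Finset.sum_eq_single i]
        · rw [map_smul, hfix i, hrepr]
        · intro j _ hji
          rw [map_smul, hae i j, hzero i j (Ne.symm hji), zero_smul, smul_zero]
        · intro h; exact absurd (Finset.mem_univ i) h
      exact coeff_nonneg (hPz ▸ hpos i z hz) (he0 i) (hene i)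
    · intro hz
      rw [← hrepr z]
      exact Finset.sum_nonneg fun j _ => smul_nonneg (hz j) (he0 j)
  intro x y
  have hsub : ∀ i, b.equivFun (y - x) i = b.equivFun y i - b.equivFun x i := by
    intro i
    rw [map_sub]
    rfl
  calc x ≤ y ↔ 0 ≤ y - x := sub_nonneg.symm
    _ ↔ ∀ i, 0 ≤ b.equivFun (y - x) i := key _
    _ ↔ ∀ i, b.equivFun x i ≤ b.equivFun y i := by
        refine forall_congr' fun i => ?_
        rw [hsub i, sub_nonneg]
    _ ↔ b.equivFun x ≤ b.equivFun y := Iff.rfl
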